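/- Let N be a structural conflict net. If N has exactly one maximal FS-run (maximal with respect to set inclusion among FS-runs of N), then N is conflict-free. -/

import Mathlib

open scoped Classical

noncomputable section

/-- A place/transition net: `pre t s` and `post t s` are the arc weights
`F(s,t)` and `F(t,s)` of the flow relation, and `M0` is the initial marking.
Every transition has a finite non-empty set of preplaces and a finite set of
postplaces. -/
structure Net (S : Type*) (T : Type*) where
  pre : T → S → ℕ
  post : T → S → ℕ
  M0 : S → ℕ
  pre_fin : ∀ t, {s | pre t s ≠ 0}.Finite
  pre_ne : ∀ t, ∃ s, pre t s ≠ 0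
  post_fin : ∀ t, {s | post t s ≠ 0}.Finite

namespace Net

variable {S T : Type*}

/-- `•G`: the multiset of preplaces of a finite multiset `G` of transitions,
as a function `S → ℕ`. -/
def preM (N : Net S T) (G : Multiset T) (s : S) : ℕ :=
  (G.map fun t => N.pre t s).sum

/-- `G•`: the multiset of postplaces of a finite multiset `G` of transitions. -/
def postM (N : Net S T) (G : Multiset T) (s : S) : ℕ :=
  (G.map fun t => N.post t s).sum

/-- The (non-empty, finite) multiset `G` of transitions is enabled in marking `M`. -/
def Enabled (N : Net S T) (M : S → ℕ) (G : Multiset T) : Prop :=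
  G ≠ 0 ∧ ∀ s, N.preM G s ≤ M s

/-- `G` is a step from `M` to `M'`. -/
def Step (N : Net S T) (M : S → ℕ) (G : Multiset T) (M' : S → ℕ) : Prop :=
  N.Enabled M G ∧ ∀ s, M' s = M s - N.preM G s + N.postM G s

/-- `M →σ M'`: sequential firing of the word `σ` of transitions. -/
def FireSeq (N : Net S T) : (S → ℕ) → List T → (S → ℕ) → Prop
  | M, [], M' => M' = M
  | M, t :: σ, M' => ∃ M₁, N.Step M {t} M₁ ∧ N.FireSeq M₁ σ M'

/-- `σ` is a firing sequence of `N`. -/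
def FS (N : Net S T) (σ : List T) : Prop := ∃ M', N.FireSeq N.M0 σ M'

/-- `M` is reachable from the initial marking. -/
def Reachable (N : Net S T) (M : S → ℕ) : Prop := ∃ σ, N.FireSeq N.M0 σ M

/-- Two firing sequences are adjacent iff they differ only in the exchange of
two neighbouring transitions that could have been fired in one step. -/
def Adjacent (N : Net S T) (σ ρ : List T) : Prop :=
  N.FS σ ∧ N.FS ρ ∧
    ∃ (σ₁ : List T) (t u : T) (σ₂ : List T) (M : S → ℕ),
      σ = σ₁ ++ t :: u :: σ₂ ∧ ρ = σ₁ ++ u :: t :: σ₂ ∧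
      N.FireSeq N.M0 σ₁ M ∧ N.Enabled M (t ::ₘ {u})

/-- `↔*`: the reflexive transitive closure of adjacency. -/
def AdjEquiv (N : Net S T) : List T → List T → Prop :=
  Relation.ReflTransGen N.Adjacent

/-- A structural conflict net: transitions that can occur together in a step
never share a preplace. -/
def StructuralConflictNet (N : Net S T) : Prop :=
  ∀ t u : T, (∃ M, N.Reachable M ∧ N.Enabled M (t ::ₘ {u})) →
    ∀ s, N.pre t s = 0 ∨ N.pre u s = 0

/-- The finite non-empty multiset `G` of transitions is in (semantic) conflict
in the marking `M`: every `G↾{t}` is enabled but `G` itself is not. -/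
def InConflict (N : Net S T) (M : S → ℕ) (G : Multiset T) : Prop :=
  G ≠ 0 ∧ (∀ t ∈ G, N.Enabled M (Multiset.replicate (G.count t) t)) ∧
    ¬ N.Enabled M G

/-- `N` is (semantic) conflict-free. -/
def ConflictFree (N : Net S T) : Prop :=
  ∀ M, N.Reachable M → ∀ G : Multiset T, ¬ N.InConflict M G

end Net

/-- The type of firing sequences of `N`. -/
def FSeq {S T : Type*} (N : Net S T) := {σ : List T // N.FS σ}

/-- Partial FS-runs: `↔*`-equivalence classes of firing sequences. -/
def PartialFSRun {S T : Type*} (N : Net S T) :=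
  Quot (fun σ ρ : FSeq N => N.AdjEquiv σ.1 ρ.1)

/-- `[σ]`, the `↔*`-equivalence class of a firing sequence. -/
def fsClass {S T : Type*} (N : Net S T) (σ : FSeq N) : PartialFSRun N :=
  Quot.mk _ σ

/-- The prefix order on partial FS-runs: `[σ] ≤ [ρ]` iff
`∃ μ, σ ≤ μ ↔* ρ`. -/
def fsRunLE {S T : Type*} (N : Net S T) (x y : PartialFSRun N) : Prop :=
  ∃ σ ρ : FSeq N, fsClass N σ = x ∧ fsClass N ρ = y ∧
    ∃ μ : List T, σ.1 <+: μ ∧ N.AdjEquiv μ ρ.1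

/-- An FS-run: a prefix-closed and directed set of partial FS-runs. -/
def IsFSRun {S T : Type*} (N : Net S T) (R : Set (PartialFSRun N)) : Prop :=
  (∀ x y, fsRunLE N x y → y ∈ R → x ∈ R) ∧
  (∀ x ∈ R, ∀ y ∈ R, ∃ z ∈ R, fsRunLE N x z ∧ fsRunLE N y z)

/-- An FS-run `R` is conflict-free iff whenever, for every `t` in a finite
non-empty multiset `G`, the class of `σ t^{G(t)}` belongs to `R` and
`M₀ →σ →(G↾{t})`, then `M₀ →σ →G`. -/
def ConflictFreeFSRun {S T : Type*} (N : Net S T)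
    (R : Set (PartialFSRun N)) : Prop :=
  ∀ (G : Multiset T) (σ : List T), G ≠ 0 →
    (∀ t ∈ G,
      (∃ h : N.FS (σ ++ List.replicate (G.count t) t),
        fsClass N ⟨σ ++ List.replicate (G.count t) t, h⟩ ∈ R) ∧
      ∃ M, N.FireSeq N.M0 σ M ∧
        N.Enabled M (Multiset.replicate (G.count t) t)) →
    ∃ M, N.FireSeq N.M0 σ M ∧ N.Enabled M G

/-- The raw data of a candidate (GR-)process of a net with places `S` and
transitions `T`: an occurrence net whose places are drawn from `α` and whose
transitions are drawn from `β`, together with the projections to `S` and `T`. -/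
structure RawProc (S T α β : Type*) where
  places : Set α
  transitions : Set β
  flowPT : α → β → ℕ
  flowTP : β → α → ℕ
  initMark : α → ℕ
  projS : α → S
  projT : β → T

namespace RawProc

variable {S T α β : Type*}

/-- The flow relation of the occurrence net, as a relation on `α ⊕ β`. -/
def flowRel (P : RawProc S T α β) : (α ⊕ β) → (α ⊕ β) → Prop := fun x y =>
  match x, y with
  | Sum.inl p, Sum.inr t => P.flowPT p t ≠ 0
  | Sum.inr t, Sum.inl p => P.flowTP t p ≠ 0
  | _, _ => False

/-- `F⁺`, the transitive closure of the flow relation. -/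
def causal (P : RawProc S T α β) : (α ⊕ β) → (α ⊕ β) → Prop :=
  Relation.TransGen P.flowRel

/-- `P` is finite iff its set of transitions is finite. -/
def FiniteProc (P : RawProc S T α β) : Prop := P.transitions.Finite

/-- `Q` is a prefix of `P` (written `Q ≤ P`): the places and transitions of `Q`
are included in those of `P`, the initial markings coincide, and flow relation
and projection of `Q` are the restrictions of those of `P`. -/
def IsPrefix (Q P : RawProc S T α β) : Prop :=
  Q.places ⊆ P.places ∧ Q.transitions ⊆ P.transitions ∧
  Q.initMark = P.initMark ∧
  (∀ p ∈ Q.places, ∀ t ∈ Q.transitions,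
    Q.flowPT p t = P.flowPT p t ∧ Q.flowTP t p = P.flowTP t p) ∧
  (∀ p ∈ Q.places, Q.projS p = P.projS p) ∧
  (∀ t ∈ Q.transitions, Q.projT t = P.projT t)

/-- Isomorphism of processes of the same net: a bijection between places and
between transitions preserving flow, initial marking and the projections. -/
def Iso (P Q : RawProc S T α β) : Prop :=
  ∃ (fS : α → α) (fT : β → β),
    Set.BijOn fS P.places Q.places ∧ Set.BijOn fT P.transitions Q.transitions ∧
    (∀ p ∈ P.places, ∀ t ∈ P.transitions,
      Q.flowPT (fS p) (fT t) = P.flowPT p t ∧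
      Q.flowTP (fT t) (fS p) = P.flowTP t p) ∧
    (∀ p ∈ P.places, Q.initMark (fS p) = P.initMark p) ∧
    (∀ p ∈ P.places, Q.projS (fS p) = P.projS p) ∧
    (∀ t ∈ P.transitions, Q.projT (fT t) = P.projT t)

/-- `swap(P,p,q)`: exchange the outgoing arcs of the places `p` and `q`. -/
def swap (P : RawProc S T α β) (p q : α) : RawProc S T α β :=
  { P with flowPT := fun x t =>
      if x = p then P.flowPT q t
      else if x = q then P.flowPT p t
      else P.flowPT x t }

/-- One step swapping equivalence `P ≈s Q`: `swap(P,p,q)` is isomorphic to `Q`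
for some causally unrelated places `p`, `q` with the same image in the net. -/
def SwapStep (P Q : RawProc S T α β) : Prop :=
  ∃ p q : α, p ∈ P.places ∧ q ∈ P.places ∧ P.projS p = P.projS q ∧
    ¬ P.causal (Sum.inl p) (Sum.inl q) ∧ ¬ P.causal (Sum.inl q) (Sum.inl p) ∧
    Iso (P.swap p q) Q

/-- `≈s*`: the reflexive transitive closure of one step swapping equivalence. -/
def SwapEquiv : RawProc S T α β → RawProc S T α β → Prop :=
  Relation.ReflTransGen SwapStep

/-- `Lin(P)`: the linearisations of a finite process `P`, i.e. the images under
the projection of the enumerations of its transitions compatible with `F*`. -/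
def Lin (P : RawProc S T α β) : Set (List T) :=
  { σ | ∃ ts : List β, ts.Nodup ∧ (∀ t : β, t ∈ ts ↔ t ∈ P.transitions) ∧
      (∀ (i j : ℕ) (hi : i < ts.length) (hj : j < ts.length),
        Relation.ReflTransGen P.flowRel
          (Sum.inr (ts.get ⟨i, hi⟩)) (Sum.inr (ts.get ⟨j, hj⟩)) → i ≤ j) ∧
      σ = ts.map P.projT }

end RawProc

/-- `P` is a (GR-)process of the net `N`: its underlying net is an occurrence
net (unbranched places, acyclic flow, finite causal pasts, transitions with
finite non-empty presets and finite postsets), the flow, initial marking and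
projections are normalised to vanish outside the places/transitions, and the
projection maps the process onto `N` respecting initial marking and arc
weights (counted via the preimages of the projection). -/
structure IsProcessOf {S T α β : Type*} (N : Net S T)
    (P : RawProc S T α β) : Prop where
  flowPT_dom : ∀ p t, P.flowPT p t ≠ 0 → p ∈ P.places ∧ t ∈ P.transitions
  flowTP_dom : ∀ t p, P.flowTP t p ≠ 0 → p ∈ P.places ∧ t ∈ P.transitions
  initMark_dom : ∀ p, p ∉ P.places → P.initMark p = 0
  pre_place : ∀ p ∈ P.places,
    {t | P.flowTP t p ≠ 0}.Subsingleton ∧ ∀ t, P.flowTP t p ≤ 1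
  post_place : ∀ p ∈ P.places,
    {t | P.flowPT p t ≠ 0}.Subsingleton ∧ ∀ t, P.flowPT p t ≤ 1
  init_one : ∀ p ∈ P.places, (∀ t, P.flowTP t p = 0) → P.initMark p = 1
  init_zero : ∀ p ∈ P.places, (∃ t, P.flowTP t p ≠ 0) → P.initMark p = 0
  acyclic : ∀ x, ¬ P.causal x x
  finite_past : ∀ t ∈ P.transitions,
    {u : β | P.causal (Sum.inr u) (Sum.inr t)}.Finite
  t_pre_fin : ∀ t ∈ P.transitions, {p | P.flowPT p t ≠ 0}.Finite
  t_pre_ne : ∀ t ∈ P.transitions, ∃ p, P.flowPT p t ≠ 0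
  t_post_fin : ∀ t ∈ P.transitions, {p | P.flowTP t p ≠ 0}.Finite
  proj_init_fin : ∀ s : S, {p | P.projS p = s ∧ P.initMark p ≠ 0}.Finite
  proj_init : ∀ s : S, (∑ᶠ p ∈ {p | P.projS p = s}, P.initMark p) = N.M0 s
  proj_pre : ∀ t ∈ P.transitions, ∀ s : S,
    (∑ᶠ p ∈ {p | P.projS p = s}, P.flowPT p t) = N.pre (P.projT t) s
  proj_post : ∀ t ∈ P.transitions, ∀ s : S,
    (∑ᶠ p ∈ {p | P.projS p = s}, P.flowTP t p) = N.post (P.projT t) s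

/-- The type of finite GR-processes of `N` with places in `α` and transitions
in `β`. -/
def FinProcOf {S T : Type*} (N : Net S T) (α β : Type*) :=
  {P : RawProc S T α β // IsProcessOf N P ∧ P.FiniteProc}

/-- Partial BD-runs: `≈s*`-equivalence classes of finite GR-processes. -/
def PartialBDRun {S T : Type*} (N : Net S T) (α β : Type*) :=
  Quot (fun P Q : FinProcOf N α β => RawProc.SwapEquiv P.1 Q.1)

/-- `⟦P⟧`, the `≈s*`-equivalence class of a finite process. -/
def bdClass {S T α β : Type*} (N : Net S T) (P : FinProcOf N α β) :
    PartialBDRun N α β :=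
  Quot.mk _ P

/-- The lifted prefix relation on `≈s*`-equivalence classes:
`⟦P⟧ ≤ ⟦Q⟧` iff `P ≈s* P' ≤ Q' ≈s* Q` for some `P'`, `Q'`. -/
def bdRunLE {S T α β : Type*} (N : Net S T)
    (x y : PartialBDRun N α β) : Prop :=
  ∃ P Q : FinProcOf N α β, bdClass N P = x ∧ bdClass N Q = y ∧
    ∃ P' Q' : RawProc S T α β,
      RawProc.SwapEquiv P.1 P' ∧ RawProc.IsPrefix P' Q' ∧
      RawProc.SwapEquiv Q' Q.1

/-- A BD-run: a prefix-closed and directed set of partial BD-runs. -/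
def IsBDRun {S T α β : Type*} (N : Net S T)
    (R : Set (PartialBDRun N α β)) : Prop :=
  (∀ x y, bdRunLE N x y → y ∈ R → x ∈ R) ∧
  (∀ x ∈ R, ∀ y ∈ R, ∃ z ∈ R, bdRunLE N x z ∧ bdRunLE N y z)

/-- `⌊P⌋ = ↓{⟦P'⟧ | P' ≤ P, P' finite}`: the prefix-closure of the set of
classes of finite prefixes of the process `P`. -/
def BDify {S T α β : Type*} (N : Net S T) (P : RawProc S T α β) :
    Set (PartialBDRun N α β) :=
  { x | ∃ Q : FinProcOf N α β, RawProc.IsPrefix Q.1 P ∧ bdRunLE N x (bdClass N Q) }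

/-- Swapping equivalence `P ≈s∞ Q` of (possibly infinite) processes:
`↓{⟦P'⟧ | P' ≤ P, P' finite} = ↓{⟦Q'⟧ | Q' ≤ Q, Q' finite}`. -/
def SwapEquivInf {S T α β : Type*} (N : Net S T)
    (P Q : RawProc S T α β) : Prop :=
  BDify N P = BDify N Q

/-- A canonical carrier type, large enough to host every GR-process of a net
with places `S` and transitions `T`. -/
abbrev BigCarrier (S T : Type*) := Set ((S ⊕ T) × ℕ)

end

section HelperLemmas

variable {S T : Type*} {N : Net S T}

lemma preM_singleton' (t : T) (s : S) : N.preM {t} s = N.pre t s := by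
  simp [Net.preM]

lemma postM_singleton' (t : T) (s : S) : N.postM {t} s = N.post t s := by
  simp [Net.postM]

lemma preM_pair' (t u : T) (s : S) :
    N.preM (t ::ₘ {u}) s = N.pre t s + N.pre u s := by
  simp [Net.preM]

lemma preM_replicate' (n : ℕ) (t : T) (s : S) :
    N.preM (Multiset.replicate n t) s = n * N.pre t s := by
  simp [Net.preM, Multiset.map_replicate, Multiset.sum_replicate, smul_eq_mul]

lemma enabled_pair_comm {M : S → ℕ} {t u : T} (h : N.Enabled M (t ::ₘ {u})) :
    N.Enabled M (u ::ₘ {t}) := by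
  refine ⟨by simp, fun s => ?_⟩
  have h2 := h.2 s
  rw [preM_pair'] at h2
  rw [preM_pair']
  omega

lemma step_unique {M M₁ M₂ : S → ℕ} {G : Multiset T}
    (h₁ : N.Step M G M₁) (h₂ : N.Step M G M₂) : M₁ = M₂ := by
  funext s; rw [h₁.2 s, h₂.2 s]

lemma fireSeq_det {σ : List T} : ∀ {M M₁ M₂ : S → ℕ},
    N.FireSeq M σ M₁ → N.FireSeq M σ M₂ → M₁ = M₂ := by
  induction σ with
  | nil => intro M M₁ M₂ h₁ h₂; exact h₁.trans h₂.symm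
  | cons t σ ih =>
    rintro M M₁ M₂ ⟨A, hA, h₁⟩ ⟨B, hB, h₂⟩
    obtain rfl : A = B := step_unique hA hB
    exact ih h₁ h₂

lemma fireSeq_append {σ ρ : List T} : ∀ {M M' : S → ℕ},
    N.FireSeq M (σ ++ ρ) M' ↔ ∃ M₁, N.FireSeq M σ M₁ ∧ N.FireSeq M₁ ρ M' := by
  induction σ with
  | nil =>
    intro M M'
    constructor
    · intro h; exact ⟨M, rfl, h⟩
    · rintro ⟨M₁, rfl, h⟩; exact h
  | cons t σ ih =>
    intro M M'
    constructor
    · rintro ⟨A, hA, h⟩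
      obtain ⟨M₁, h1, h2⟩ := ih.1 h
      exact ⟨M₁, ⟨A, hA, h1⟩, h2⟩
    · rintro ⟨M₁, ⟨A, hA, h1⟩, h2⟩
      exact ⟨A, hA, ih.2 ⟨M₁, h1, h2⟩⟩

lemma swap_pair {M : S → ℕ} {t u : T} (h : N.Enabled M (t ::ₘ {u})) :
    ∃ M', N.FireSeq M [t, u] M' ∧ N.FireSeq M [u, t] M' := by
  have key : ∀ s, N.pre t s + N.pre u s ≤ M s := fun s => by
    have h2 := h.2 s; rwa [preM_pair'] at h2
  have fire : ∀ a b : T, (∀ s, N.pre a s + N.pre b s ≤ M s) →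
      N.FireSeq M [a, b]
        (fun s => M s - N.pre a s + N.post a s - N.pre b s + N.post b s) := by
    intro a b hab
    refine ⟨fun s => M s - N.pre a s + N.post a s,
      ⟨⟨by simp, fun s => by have := hab s; simp only [preM_singleton']; omega⟩,
        fun s => by simp [preM_singleton', postM_singleton']⟩,
      fun s => M s - N.pre a s + N.post a s - N.pre b s + N.post b s,
      ⟨⟨by simp, fun s => by have := hab s; simp only [preM_singleton']; omega⟩,
        fun s => by simp [preM_singleton', postM_singleton']⟩, rfl⟩
  have h1 := fire t u key
  have h2 := fire u t (fun s => by have := key s; omega)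
  have e : (fun s => M s - N.pre u s + N.post u s - N.pre t s + N.post t s)
      = (fun s => M s - N.pre t s + N.post t s - N.pre u s + N.post u s) := by
    funext s; have := key s; omega
  rw [e] at h2
  exact ⟨_, h1, h2⟩

lemma adjacent_fireSeq {σ ρ : List T} {M : S → ℕ}
    (h : N.Adjacent σ ρ) (hσ : N.FireSeq N.M0 σ M) : N.FireSeq N.M0 ρ M := by
  obtain ⟨-, -, σ₁, t, u, σ₂, M₁, rfl, rfl, hM₁, hen⟩ := h
  rw [show σ₁ ++ t :: u :: σ₂ = σ₁ ++ ([t, u] ++ σ₂) from rfl] at hσ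
  rw [show σ₁ ++ u :: t :: σ₂ = σ₁ ++ ([u, t] ++ σ₂) from rfl]
  obtain ⟨A, hA, hrest⟩ := fireSeq_append.1 hσ
  obtain ⟨B, hB, htail⟩ := fireSeq_append.1 hrest
  obtain rfl : A = M₁ := fireSeq_det hA hM₁
  obtain ⟨C, hC1, hC2⟩ := swap_pair hen
  obtain rfl : B = C := fireSeq_det hB hC1
  exact fireSeq_append.2 ⟨_, hM₁, fireSeq_append.2 ⟨_, hC2, htail⟩⟩

lemma adjacent_symm {σ ρ : List T} (h : N.Adjacent σ ρ) : N.Adjacent ρ σ := by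
  obtain ⟨h1, h2, σ₁, t, u, σ₂, M, e1, e2, hM, hen⟩ := h
  exact ⟨h2, h1, σ₁, u, t, σ₂, M, e2, e1, hM, enabled_pair_comm hen⟩

lemma adjEquiv_symm {σ ρ : List T} (h : N.AdjEquiv σ ρ) : N.AdjEquiv ρ σ :=
  (@Relation.ReflTransGen.stdSymm _ _ ⟨fun _ _ => adjacent_symm⟩).symm _ _ h

lemma adjEquiv_fireSeq {σ ρ : List T} {M : S → ℕ}
    (h : N.AdjEquiv σ ρ) (hσ : N.FireSeq N.M0 σ M) : N.FireSeq N.M0 ρ M := by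
  induction h with
  | refl => exact hσ
  | tail _ hadj ih => exact adjacent_fireSeq hadj ih

lemma adjEquiv_append {a b w : List T} (h : N.AdjEquiv a b) :
    N.FS (b ++ w) → N.FS (a ++ w) ∧ N.AdjEquiv (a ++ w) (b ++ w) := by
  induction h with
  | refl => exact fun hw => ⟨hw, Relation.ReflTransGen.refl⟩
  | tail _ hadj ih =>
    intro hw
    obtain ⟨M', hM'⟩ := hw
    obtain ⟨Mb, hMb, hwseq⟩ := fireSeq_append.1 hM'
    have hc := adjacent_fireSeq (adjacent_symm hadj) hMb
    have hcw : N.FS _ := ⟨M', fireSeq_append.2 ⟨Mb, hc, hwseq⟩⟩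
    obtain ⟨h1, h2⟩ := ih hcw
    refine ⟨h1, h2.tail ?_⟩
    obtain ⟨-, -, σ₁, t, u, σ₂, M, rfl, rfl, hM, hen⟩ := hadj
    exact ⟨hcw, ⟨M', hM'⟩, σ₁, t, u, σ₂ ++ w, M, by simp, by simp, hM, hen⟩

lemma fsClass_exact {σ ρ : FSeq N} (h : fsClass N σ = fsClass N ρ) :
    N.AdjEquiv σ.1 ρ.1 := by
  have H := Quot.eqvGen_exact h
  clear h
  induction H with
  | rel x y hxy => exact hxy
  | refl => exact Relation.ReflTransGen.refl
  | symm x y _ ih => exact adjEquiv_symm ih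
  | trans x y z _ _ ih₁ ih₂ => exact ih₁.trans ih₂

lemma fsRunLE_refl (x : PartialFSRun N) : fsRunLE N x x := by
  induction x using Quot.ind with
  | _ σ => exact ⟨σ, σ, rfl, rfl, σ.1, List.prefix_refl _, Relation.ReflTransGen.refl⟩

lemma fsRunLE_trans {x y z : PartialFSRun N}
    (h₁ : fsRunLE N x y) (h₂ : fsRunLE N y z) : fsRunLE N x z := by
  obtain ⟨σa, ρb, hxa, hyb, μ, hpre, hequiv⟩ := h₁
  obtain ⟨σc, ρd, hyc, hzd, ν, hpre', hequiv'⟩ := h₂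
  have hbc : N.AdjEquiv ρb.1 σc.1 := fsClass_exact (hyb.trans hyc.symm)
  obtain ⟨w, rfl⟩ := hpre'
  have hνfs : N.FS (σc.1 ++ w) := by
    obtain ⟨M, hM⟩ := ρd.2
    exact ⟨M, adjEquiv_fireSeq (adjEquiv_symm hequiv') hM⟩
  obtain ⟨hfs, hap⟩ := adjEquiv_append (hequiv.trans hbc) hνfs
  exact ⟨σa, ρd, hxa, hzd, μ ++ w,
    hpre.trans (List.prefix_append _ _), hap.trans hequiv'⟩

lemma adjacent_filter [DecidableEq T] {t u : T} (hne : t ≠ u)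
    (hblock : ∀ M, N.Reachable M → ¬ N.Enabled M (t ::ₘ {u}))
    {σ ρ : List T} (h : N.Adjacent σ ρ) :
    σ.filter (fun x => decide (x = t ∨ x = u))
      = ρ.filter (fun x => decide (x = t ∨ x = u)) := by
  set p : T → Bool := fun x => decide (x = t ∨ x = u) with hp
  obtain ⟨-, -, σ₁, x, y, σ₂, M, rfl, rfl, hM, hen⟩ := h
  have hxy : List.filter p [x, y] = List.filter p [y, x] := by
    by_cases hx : x = y
    · subst hx; rfl
    · have hnot : ¬((x = t ∨ x = u) ∧ (y = t ∨ y = u)) := by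
        rintro ⟨hx1 | hx1, hy1 | hy1⟩
        · exact hx (hx1.trans hy1.symm)
        · subst hx1; subst hy1; exact hblock M ⟨σ₁, hM⟩ hen
        · subst hx1; subst hy1; exact hblock M ⟨σ₁, hM⟩ (enabled_pair_comm hen)
        · exact hx (hx1.trans hy1.symm)
      have e1 : (p x = true ∧ p y = false) ∨ (p x = false ∧ p y = true) ∨
          (p x = false ∧ p y = false) := by
        have pf : ∀ a : T, ¬(a = t ∨ a = u) → p a = false := fun a ha => by
          simp only [hp, decide_eq_false_iff_not]; exact ha
        have pt : ∀ a : T, (a = t ∨ a = u) → p a = true := fun a ha => by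
          simp [hp, ha]
        by_cases hpx : x = t ∨ x = u <;> by_cases hpy : y = t ∨ y = u
        · exact absurd ⟨hpx, hpy⟩ hnot
        · exact Or.inl ⟨pt x hpx, pf y hpy⟩
        · exact Or.inr (Or.inl ⟨pf x hpx, pt y hpy⟩)
        · exact Or.inr (Or.inr ⟨pf x hpx, pf y hpy⟩)
      rcases e1 with ⟨ex, ey⟩ | ⟨ex, ey⟩ | ⟨ex, ey⟩ <;>
        simp [List.filter_cons, ex, ey]
  calc (σ₁ ++ x :: y :: σ₂).filter p
      = σ₁.filter p ++ ([x, y].filter p ++ σ₂.filter p) := by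
        rw [show x :: y :: σ₂ = [x, y] ++ σ₂ from rfl, List.filter_append,
          List.filter_append]
    _ = σ₁.filter p ++ ([y, x].filter p ++ σ₂.filter p) := by rw [hxy]
    _ = (σ₁ ++ y :: x :: σ₂).filter p := by
        rw [show y :: x :: σ₂ = [y, x] ++ σ₂ from rfl, List.filter_append,
          List.filter_append]

lemma adjEquiv_filter [DecidableEq T] {t u : T} (hne : t ≠ u)
    (hblock : ∀ M, N.Reachable M → ¬ N.Enabled M (t ::ₘ {u}))
    {σ ρ : List T} (h : N.AdjEquiv σ ρ) :
    σ.filter (fun x => decide (x = t ∨ x = u))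
      = ρ.filter (fun x => decide (x = t ∨ x = u)) := by
  induction h with
  | refl => rfl
  | tail _ hadj ih => exact ih.trans (adjacent_filter hne hblock hadj)

lemma preM_eq_count_mul {t : T} {s : S} :
    ∀ G : Multiset T, (∀ x ∈ G, x ≠ t → N.pre x s = 0) →
      N.preM G s = G.count t * N.pre t s := by
  intro G
  induction G using Multiset.induction_on with
  | empty => intro _; simp [Net.preM]
  | cons x G ih =>
    intro h
    have hG : ∀ x ∈ G, x ≠ t → N.pre x s = 0 := fun y hy => h y (Multiset.mem_cons_of_mem hy)
    have hx := h x (Multiset.mem_cons_self x G)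
    rw [show N.preM (x ::ₘ G) s = N.pre x s + N.preM G s from by simp [Net.preM],
      ih hG, Multiset.count_cons]
    by_cases hxt : t = x
    · subst hxt; simp [Nat.succ_mul, Nat.add_comm]
    · rw [hx (fun e => hxt e.symm), if_neg hxt]
      ring

lemma exists_two_conflicting {G : Multiset T} {M : S → ℕ} {s : S} (hG0 : G ≠ 0)
    (hs : M s < N.preM G s) (hcount : ∀ t ∈ G, G.count t * N.pre t s ≤ M s) :
    ∃ t ∈ G, ∃ u ∈ G, t ≠ u ∧ N.pre t s ≠ 0 ∧ N.pre u s ≠ 0 := by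
  by_contra hcon
  push_neg at hcon
  by_cases hex : ∃ t ∈ G, N.pre t s ≠ 0
  · obtain ⟨t, htG, hts⟩ := hex
    have hzero : ∀ x ∈ G, x ≠ t → N.pre x s = 0 := by
      intro x hx hxt
      exact hcon t htG x hx (fun e => hxt e.symm) hts
    have := preM_eq_count_mul (N := N) G hzero
    have h2 := hcount t htG
    omega
  · push_neg at hex
    obtain ⟨t₀, ht₀⟩ := Multiset.exists_mem_of_ne_zero hG0
    have := preM_eq_count_mul (N := N) (t := t₀) G (fun x hx _ => hex x hx)
    rw [hex t₀ ht₀] at this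
    omega

lemma downset_isFSRun (x : PartialFSRun N) : IsFSRun N {y | fsRunLE N y x} :=
  ⟨fun _ _ hab hb => fsRunLE_trans hab hb,
   fun _ ha _ hb => ⟨x, fsRunLE_refl x, ha, hb⟩⟩

lemma exists_maximal_run (x : PartialFSRun N) :
    ∃ R, IsFSRun N R ∧ x ∈ R ∧ ∀ R', IsFSRun N R' → R ⊆ R' → R' = R := by
  obtain ⟨m, hxm, hmax⟩ := zorn_subset_nonempty
    {R : Set (PartialFSRun N) | IsFSRun N R ∧ x ∈ R}
    (fun c hcS hchain hcne => by
      obtain ⟨R₀, hR₀⟩ := hcne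
      refine ⟨⋃₀ c, ⟨⟨?_, ?_⟩, Set.mem_sUnion.2 ⟨R₀, hR₀, (hcS hR₀).2⟩⟩,
        fun s hs => Set.subset_sUnion_of_mem hs⟩
      · rintro a b hab ⟨R, hR, hbR⟩
        exact ⟨R, hR, (hcS hR).1.1 a b hab hbR⟩
      · rintro a ⟨R₁, hR₁, haR₁⟩ b ⟨R₂, hR₂, hbR₂⟩
        rcases hchain.total hR₁ hR₂ with hle | hle
        · obtain ⟨z, hz, h1, h2⟩ := (hcS hR₂).1.2 a (hle haR₁) b hbR₂
          exact ⟨z, ⟨R₂, hR₂, hz⟩, h1, h2⟩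
        · obtain ⟨z, hz, h1, h2⟩ := (hcS hR₁).1.2 a haR₁ b (hle hbR₂)
          exact ⟨z, ⟨R₁, hR₁, hz⟩, h1, h2⟩)
    {y | fsRunLE N y x} ⟨downset_isFSRun x, fsRunLE_refl x⟩
  refine ⟨m, hmax.1.1, hmax.1.2, fun R' hR' hsub => ?_⟩
  exact subset_antisymm (hmax.2 ⟨hR', hsub hmax.1.2⟩ hsub) hsub

end HelperLemmas

/-- Theorem 6 of the paper: a structural conflict net with
exactly one maximal FS-run (wrt set inclusion) is conflict-free. -/
theorem conflictFree_of_unique_maximal_fsRun {S T : Type*}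
    (N : Net S T) (hN : N.StructuralConflictNet)
    (h : ∃! R : Set (PartialFSRun N), IsFSRun N R ∧
      ∀ R' : Set (PartialFSRun N), IsFSRun N R' → R ⊆ R' → R' = R) :
    N.ConflictFree := by
  classical
  obtain ⟨R, ⟨hRrun, _⟩, huniq⟩ := h
  intro M hreach G hG
  obtain ⟨hG0, hsingle, hnotG⟩ := hG
  have hex : ∃ s, M s < N.preM G s := by
    by_contra hc
    push_neg at hc
    exact hnotG ⟨hG0, fun s => hc s⟩
  obtain ⟨s, hs⟩ := hex
  have hcount : ∀ t ∈ G, G.count t * N.pre t s ≤ M s := by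
    intro t ht
    have h2 := (hsingle t ht).2 s
    rwa [preM_replicate'] at h2
  obtain ⟨t, htG, u, huG, hne, hts, hus⟩ := exists_two_conflicting hG0 hs hcount
  -- single enabledness of t and u at M
  have hsingleEn : ∀ v ∈ G, N.Enabled M {v} := by
    intro v hv
    refine ⟨by simp, fun s' => ?_⟩
    have h2 := (hsingle v hv).2 s'
    rw [preM_replicate'] at h2
    have hc1 : 1 ≤ G.count v := Multiset.one_le_count_iff_mem.2 hv
    rw [preM_singleton']
    calc N.pre v s' = 1 * N.pre v s' := (one_mul _).symm
      _ ≤ G.count v * N.pre v s' := Nat.mul_le_mul_right _ hc1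
      _ ≤ M s' := h2
  obtain ⟨σ, hσ⟩ := hreach
  have hfsv : ∀ v ∈ G, N.FS (σ ++ [v]) := by
    intro v hv
    exact ⟨_, fireSeq_append.2 ⟨M, hσ, _, ⟨hsingleEn v hv, fun s' => rfl⟩, rfl⟩⟩
  have hfst := hfsv t htG
  have hfsu := hfsv u huG
  have hblock : ∀ M', N.Reachable M' → ¬ N.Enabled M' (t ::ₘ {u}) := by
    intro M' hM' hE
    rcases hN t u ⟨M', hM', hE⟩ s with h' | h'
    · exact hts h'
    · exact hus h'
  -- maximal runs containing [σt] and [σu]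
  obtain ⟨Rt, hRtrun, hxt, hRtmax⟩ := exists_maximal_run (fsClass N ⟨σ ++ [t], hfst⟩)
  obtain ⟨Ru, hRurun, hxu, hRumax⟩ := exists_maximal_run (fsClass N ⟨σ ++ [u], hfsu⟩)
  have ht' : Rt = R := huniq Rt ⟨hRtrun, hRtmax⟩
  have hu' : Ru = R := huniq Ru ⟨hRurun, hRumax⟩
  rw [ht'] at hxt
  rw [hu'] at hxu
  obtain ⟨z, _, hletz, hleuz⟩ := hRrun.2 _ hxt _ hxu
  obtain ⟨σ', ρ₁, hσ'cls, hρ₁z, μ₁, hμ₁pre, hμ₁eq⟩ := hletz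
  obtain ⟨σ'', ρ₂, hσ''cls, hρ₂z, μ₂, hμ₂pre, hμ₂eq⟩ := hleuz
  have e1 : N.AdjEquiv σ'.1 (σ ++ [t]) := fsClass_exact hσ'cls
  have e2 : N.AdjEquiv σ''.1 (σ ++ [u]) := fsClass_exact hσ''cls
  have e3 : N.AdjEquiv ρ₁.1 ρ₂.1 := fsClass_exact (hρ₁z.trans hρ₂z.symm)
  obtain ⟨w₁, rfl⟩ := hμ₁pre
  obtain ⟨w₂, rfl⟩ := hμ₂pre
  set p : T → Bool := fun x => decide (x = t ∨ x = u) with hp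
  have F : (σ'.1 ++ w₁).filter p = (σ''.1 ++ w₂).filter p :=
    (adjEquiv_filter hne hblock hμ₁eq).trans
      ((adjEquiv_filter hne hblock e3).trans
        (adjEquiv_filter hne hblock hμ₂eq).symm)
  rw [List.filter_append, List.filter_append,
    adjEquiv_filter hne hblock e1, adjEquiv_filter hne hblock e2,
    List.filter_append, List.filter_append] at F
  have hpt : p t = true := by simp [hp]
  have hpu : p u = true := by simp [hp]
  have hft : List.filter p [t] = [t] := by simp [List.filter, hpt]
  have hfu : List.filter p [u] = [u] := by simp [List.filter, hpu]
  rw [hft, hfu, List.append_assoc, List.append_assoc] at F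
  have F2 := List.append_cancel_left F
  simp only [List.singleton_append, List.cons.injEq] at F2
  exact hne F2.1
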